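/- Let k be a field and X a finite-dimensional k-vector space equipped with a nondegenerate alternating bilinear form ω. Let φ be a k-linear automorphism of X of finite order m satisfying ω(φ(u), φ(v)) = ω(u,v) for all u, v ∈ X, and assume the polynomial x^m − 1 splits into linear factors over k. Then there exists a totally isotropic subspace W' ⊆ X with dim_k W' = (dim_k X)/2 and φ(W') = W'. -/

import Mathlib

open Finset

open scoped Classical

noncomputable section

/-- Length-two Witt vectors, with the operations specialised to characteristic two. -/
def W2 (R : Type*) := R × R

namespace W2

variable {R : Type*} [CommRing R]

instance : Zero (W2 R) := ⟨((0, 0) : R × R)⟩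

instance : Add (W2 R) := ⟨fun x y => ((x.1 + y.1, x.2 + y.2 + x.1 * y.1) : R × R)⟩

instance [CharP R 2] : Neg (W2 R) := ⟨fun x => ((x.1, x.2 + x.1 * x.1) : R × R)⟩

theorem fst_add (x y : W2 R) : (x + y).1 = x.1 + y.1 := rfl
theorem snd_add (x y : W2 R) : (x + y).2 = x.2 + y.2 + x.1 * y.1 := rfl
theorem fst_zero : (0 : W2 R).1 = 0 := rfl
theorem snd_zero : (0 : W2 R).2 = 0 := rfl
theorem fst_neg [CharP R 2] (x : W2 R) : (-x).1 = x.1 := rfl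
theorem snd_neg [CharP R 2] (x : W2 R) : (-x).2 = x.2 + x.1 * x.1 := rfl

instance [CharP R 2] : AddCommGroup (W2 R) where
  add := (· + ·)
  zero := 0
  neg := Neg.neg
  add_assoc a b c := Prod.ext_iff.mpr (by
    constructor <;> simp only [fst_add, snd_add] <;> ring)
  zero_add a := Prod.ext_iff.mpr (by
    constructor <;> simp [fst_add, snd_add, fst_zero, snd_zero])
  add_zero a := Prod.ext_iff.mpr (by
    constructor <;> simp [fst_add, snd_add, fst_zero, snd_zero])
  add_comm a b := Prod.ext_iff.mpr (by
    constructor <;> simp only [fst_add, snd_add] <;> ring)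
  neg_add_cancel a := Prod.ext_iff.mpr (by
    constructor
    · simp only [fst_add, fst_neg, fst_zero]
      exact CharTwo.add_self_eq_zero a.1
    · simp only [snd_add, snd_neg, snd_zero, fst_neg]
      rw [show a.2 + a.1 * a.1 + a.2 + a.1 * a.1
            = (a.2 + a.2) + (a.1 * a.1 + a.1 * a.1) by ring]
      rw [CharTwo.add_self_eq_zero, CharTwo.add_self_eq_zero, add_zero])
  nsmul := nsmulRec
  zsmul := zsmulRec

/-- Frobenius on length-two Witt vectors (characteristic two). -/
def frob (x : W2 R) : W2 R := ((x.1 ^ 2, x.2 ^ 2) : R × R)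

/-- The Witt-vector trace `Tr_{q/2} = ∑_{i=0}^{n-1} Frobⁱ`. -/
def tr [CharP R 2] (n : ℕ) (x : W2 R) : W2 R := ∑ i ∈ Finset.range n, frob^[i] x

/-- The additive character of `W₂(𝔽₂)` determined by `ξ₂(1,0) = I`
(for `I` a fixed primitive fourth root of unity), evaluated on Witt vectors
whose components lie in the prime field `𝔽₂ = {0,1}`. -/
def xi (I : ℂ) (x : W2 R) : ℂ := (if x.1 = 0 then 1 else I) * (if x.2 = 0 then 1 else -1)

end W2

variable {K : Type*}

/-- The absolute trace `Tr_{q/2} : 𝔽_q → 𝔽₂`, computed inside `K` (here `q = 2^n`). -/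
def tr2 [Field K] (n : ℕ) (x : K) : K := ∑ i ∈ Finset.range n, x ^ 2 ^ i

/-- The relative trace `Tr_{q/p} : 𝔽_q → 𝔽_p ⊆ 𝔽_q`, computed inside `K`
(here `q = p^m`). -/
def trp [Field K] (p m : ℕ) (x : K) : K := ∑ i ∈ Finset.range m, x ^ p ^ i

/-- The character `ψ_q(x) = (-1)^{Tr_{q/2}(x)}`. -/
def psiq [Field K] (n : ℕ) (x : K) : ℂ := if tr2 n x = 0 then 1 else -1

/-- The map `Q_q(x) = ξ₂(Tr_{q/2}(x,0))` on Witt vectors of length two. -/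
def Qq [Field K] [CharP K 2] (I : ℂ) (n : ℕ) (x : K) : ℂ :=
  W2.xi I (W2.tr n (((x, 0) : K × K) : W2 K))

/-- The unique `2^j`-th root in a perfect field of characteristic two. -/
def rt (L : Type*) [Field L] [ExpChar L 2] [PerfectRing L 2] (j : ℕ) (x : L) : L :=
  (fun y => (frobeniusEquiv L 2).symm y)^[j] x

/-- Evaluation of the `𝔽_p`-linearised polynomial `∑_{i=0}^{e} c_i x^{p^i}`. -/
def Lpoly [Field K] (p e : ℕ) (c : ℕ → K) (x : K) : K :=
  ∑ i ∈ Finset.range (e + 1), c i * x ^ p ^ i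

/-- The adjoint `f^*(x) = ∑_{i=0}^{e} (c_i x)^{p^{-i}}` (with `p = 2^k`). -/
def adj [Field K] [ExpChar K 2] [PerfectRing K 2] (k e : ℕ) (c : ℕ → K) (x : K) : K :=
  ∑ i ∈ Finset.range (e + 1), rt K (k * i) (c i * x)

/-- Evaluation of the `𝔽_p`-linearised polynomial `∑_{i=1}^{e} c_i x^{p^i}`
(no constant-in-`x` coefficient). -/
def LpolyIcc [Field K] (p e : ℕ) (c : ℕ → K) (x : K) : K :=
  ∑ i ∈ Finset.Icc 1 e, c i * x ^ p ^ i

/-- The adjoint `R^*(x) = ∑_{i=1}^{e} (c_i x)^{p^{-i}}` (with `p = 2^k`). -/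
def adjIcc [Field K] [ExpChar K 2] [PerfectRing K 2] (k e : ℕ) (c : ℕ → K) (x : K) : K :=
  ∑ i ∈ Finset.Icc 1 e, rt K (k * i) (c i * x)

/-- The coefficients `a_i = ∑_{j=0}^{e-i} (b_j b_{j+i})^{p^{-j}}` of `R_F` (with `p = 2^k`). -/
def aRF [Field K] [ExpChar K 2] [PerfectRing K 2] (k e : ℕ) (b : ℕ → K) (i : ℕ) : K :=
  ∑ j ∈ Finset.range (e - i + 1), rt K (k * j) (b j * b (j + i))

/-- The linearised polynomial `R_F(x) = ∑_{i=1}^{e} a_i x^{p^i}` (with `p = 2^k`). -/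
def RF [Field K] [ExpChar K 2] [PerfectRing K 2] (k e : ℕ) (b : ℕ → K) (x : K) : K :=
  ∑ i ∈ Finset.Icc 1 e, aRF k e b i * x ^ (2 ^ k) ^ i

/-- `γ_F = ∑_{0 ≤ i < j ≤ e} b_i^{p^{-i}} b_j^{p^{-j}}` (with `p = 2^k`). -/
def gammaF [Field K] [ExpChar K 2] [PerfectRing K 2] (k e : ℕ) (b : ℕ → K) : K :=
  ∑ i ∈ Finset.range (e + 1), ∑ j ∈ Finset.Ioo i (e + 1), rt K (k * i) (b i) * rt K (k * j) (b j)

/-- `α_F(t) = γ_F + F^*(t)²`. -/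
def alphaF [Field K] [ExpChar K 2] [PerfectRing K 2] (k e : ℕ) (b : ℕ → K) (t : K) : K :=
  gammaF k e b + adj k e b t ^ 2

/-- `R_{F,t}(x) = R_F(x) + α_F(t) x`. -/
def RFt [Field K] [ExpChar K 2] [PerfectRing K 2] (k e : ℕ) (b : ℕ → K) (t x : K) : K :=
  RF k e b x + alphaF k e b t * x

/-- The number of affine points of the van der Geer–van der Vlugt curve
`y^p - y = x R(x)` with coordinates in `K`. -/
def Ncount (K : Type*) [Field K] (p : ℕ) (R : K → K) : ℕ :=
  Nat.card {z : K × K // z.2 ^ p - z.2 = z.1 * R z.1}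

/-- The adjoint `F^*` of `F(x) = ∑_{i=0}^{e} b_i x^{p^i}`, with coefficients `b_i ∈ K`,
viewed as a function on the algebraic closure `𝔽` of `K`. -/
def adjBar [Field K] [CharP K 2] (k e : ℕ) (b : ℕ → K) (x : AlgebraicClosure K) : AlgebraicClosure K :=
  adj k e (fun i => algebraMap K (AlgebraicClosure K) (b i)) x

/-- `F(x) = ∑_{i=0}^{e} b_i x^{p^i}`, with coefficients `b_i ∈ K`, viewed as a function on
the algebraic closure `𝔽` of `K` (with `p = 2^k`). -/
def LpolyBar [Field K] [CharP K 2] (k e : ℕ) (b : ℕ → K) (x : AlgebraicClosure K) : AlgebraicClosure K :=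
  Lpoly (2 ^ k) e (fun i => algebraMap K (AlgebraicClosure K) (b i)) x


universe uX

set_option maxHeartbeats 2000000 in
theorem stmt18_aux {k : Type*} [Field k] (n : ℕ) :
    ∀ {X : Type uX} [AddCommGroup X] [Module k X] [FiniteDimensional k X],
    Module.finrank k X = n →
    ∀ (ω : X →ₗ[k] X →ₗ[k] k), (∀ u : X, ω u u = 0) →
    (∀ u : X, (∀ v : X, ω u v = 0) → u = 0) →
    ∀ m : ℕ, 1 ≤ m → ∀ φ : X ≃ₗ[k] X, φ ^ m = 1 →
    (∀ u v : X, ω (φ u) (φ v) = ω u v) →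
    Polynomial.Splits (Polynomial.X ^ m - 1 : Polynomial k) →
    ∃ W' : Submodule k X, Module.finrank k W' = Module.finrank k X / 2 ∧
      (∀ u ∈ W', ∀ v ∈ W', ω u v = 0) ∧
      Submodule.map (φ : X →ₗ[k] X) W' = W' := by
  induction n using Nat.strong_induction_on with
  | _ n ih =>
  intro X _ _ _ hrank ω halt hnd m hm φ hφm hω hsplit
  have hskew : ∀ u w : X, ω u w = - ω w u := by
    intro u w
    have h := halt (u + w)
    simp only [map_add, LinearMap.add_apply, halt] at h
    have h2 : ω u w + ω w u = 0 := by rw [← h]; ring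
    exact eq_neg_of_add_eq_zero_left h2
  rcases Nat.eq_zero_or_pos n with h0 | hpos
  · refine ⟨⊥, ?_, ?_, ?_⟩
    · simp [hrank, h0]
    · intro u hu v hv
      rw [Submodule.mem_bot] at hu
      simp [hu]
    · simp
  -- `X` is nontrivial
  have hnontriv : Nontrivial X := by
    rw [← Module.finrank_pos_iff (R := k)]; omega
  -- find an eigenvector of `φ`
  have hXm : (Polynomial.X ^ m - 1 : Polynomial k) ≠ 0 := by
    simpa using (Polynomial.monic_X_pow_sub_C (1 : k) (by omega)).ne_zero
  have haev : Polynomial.aeval (R := k) (φ.toLinearMap : Module.End k X) (Polynomial.X ^ m - 1) = 0 := by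
    have hφm' : (φ.toLinearMap : Module.End k X) ^ m = 1 := by
      ext x
      have h1 : (φ ^ m) x = x := by rw [hφm]; rfl
      rw [LinearEquiv.pow_apply] at h1
      rw [Module.End.pow_apply]
      show (⇑φ)^[m] x = (1 : Module.End k X) x
      rw [h1]
      rfl
    simp [map_sub, map_pow, hφm']
  have hint : IsIntegral k (φ.toLinearMap : Module.End k X) := LinearMap.isIntegral _
  have hdvdm := minpoly.dvd k (φ.toLinearMap : Module.End k X) haev
  have hmsplit : Polynomial.Splits (minpoly k (φ.toLinearMap : Module.End k X)) :=
    hsplit.of_dvd hXm hdvdm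
  have hdeg : (minpoly k (φ.toLinearMap : Module.End k X)).degree ≠ 0 := by
    have h1 := minpoly.natDegree_pos (B := Module.End k X) hint
    rw [Polynomial.degree_eq_natDegree (minpoly.ne_zero hint)]
    exact_mod_cast h1.ne'
  obtain ⟨μ, hμroot⟩ := hmsplit.exists_eval_eq_zero hdeg
  have heig : Module.End.HasEigenvalue (φ.toLinearMap : Module.End k X) μ :=
    Module.End.hasEigenvalue_of_isRoot (by simpa [Polynomial.IsRoot] using hμroot)
  obtain ⟨v, hvmem, hv0⟩ := heig.exists_hasEigenvector
  have hφv : φ v = μ • v := by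
    rwa [Module.End.mem_eigenspace_iff] at hvmem
  have hμ0 : μ ≠ 0 := by
    intro h
    apply hv0
    apply φ.injective
    rw [hφv, h, zero_smul, map_zero]
  -- the hyperplane `N = ker (ω v)`
  have hg : (ω v : X →ₗ[k] k) ≠ 0 := by
    intro h
    exact hv0 (hnd v fun w => by rw [h]; rfl)
  set N : Submodule k X := LinearMap.ker (ω v) with hNdef
  have hvN : v ∈ N := by simpa [hNdef, LinearMap.mem_ker] using halt v
  have hNrank : Module.finrank k N = n - 1 := by
    obtain ⟨x0, hx0⟩ : ∃ x0, ω v x0 ≠ 0 := by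
      by_contra h
      push_neg at h
      exact hg (LinearMap.ext fun w => h w)
    have hrangetop : LinearMap.range (ω v) = ⊤ := by
      rw [LinearMap.range_eq_top]
      intro c
      exact ⟨(c * (ω v x0)⁻¹) • x0, by
        simp only [map_smul, smul_eq_mul]
        field_simp⟩
    have h := LinearMap.finrank_range_add_finrank_ker (ω v)
    rw [← hNdef, hrangetop, finrank_top, Module.finrank_self, hrank] at h
    omega
  -- `φ` restricts to `N`
  have hNmem : ∀ u ∈ N, φ u ∈ N := by
    intro u hu
    rw [hNdef, LinearMap.mem_ker] at hu ⊢
    have h1 : ω (φ v) (φ u) = ω v u := hω v u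
    rw [hφv, map_smul, LinearMap.smul_apply, smul_eq_mul, hu] at h1
    exact (mul_eq_zero.mp h1).resolve_left hμ0
  have hNmem' : ∀ u ∈ N, φ.symm u ∈ N := by
    intro u hu
    rw [hNdef, LinearMap.mem_ker] at hu ⊢
    have h1 : ω (φ v) (φ (φ.symm u)) = ω v (φ.symm u) := hω v (φ.symm u)
    rw [φ.apply_symm_apply, hφv, map_smul, LinearMap.smul_apply, smul_eq_mul, hu] at h1
    rw [mul_zero] at h1
    exact h1.symm
  have hmapN : N.map (φ : X →ₗ[k] X) = N := by
    apply le_antisymm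
    · rintro _ ⟨u, hu, rfl⟩
      exact hNmem u hu
    · intro u hu
      exact ⟨φ.symm u, hNmem' u hu, φ.apply_symm_apply u⟩
  set φN : N ≃ₗ[k] N := φ.ofSubmodules N N hmapN with hφNdef
  have hφNapp : ∀ u : N, (φN u : X) = φ (u : X) := fun u =>
    LinearEquiv.ofSubmodules_apply φ hmapN u
  have hφNsymm : ∀ u : N, ((φN.symm u : N) : X) = φ.symm (u : X) := fun u =>
    LinearEquiv.ofSubmodules_symm_apply φ hmapN u
  set vN : N := ⟨v, hvN⟩ with hvNdef
  have hvNne : vN ≠ 0 := fun h => hv0 (by simpa [hvNdef, Subtype.ext_iff] using h)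
  set L' : Submodule k N := k ∙ vN with hL'def
  have hL'rank : Module.finrank k L' = 1 := finrank_span_singleton hvNne
  have hφNv : φN vN = μ • vN := by
    apply Subtype.ext
    rw [hφNapp]
    simp only [hvNdef]
    rw [hφv]
    rfl
  have hmapL : L'.map (φN : N →ₗ[k] N) = L' := by
    show Submodule.map (φN : N →ₗ[k] N) (k ∙ vN) = k ∙ vN
    rw [Submodule.map_span, Set.image_singleton]
    show (k ∙ (φN vN : N)) = k ∙ vN
    rw [hφNv]
    exact Submodule.span_singleton_smul_eq (Ne.isUnit hμ0) vN
  -- `n ≥ 2`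
  have hn2 : 2 ≤ n := by
    have h1 : Module.finrank k L' ≤ Module.finrank k N := Submodule.finrank_le L'
    omega
  -- the quotient form
  set ωN : N →ₗ[k] N →ₗ[k] k := ω.compl₁₂ N.subtype N.subtype with hωNdef
  have hωNapp : ∀ u w : N, ωN u w = ω (u : X) (w : X) := fun u w => rfl
  have hker1 : L' ≤ LinearMap.ker ωN := by
    show (k ∙ vN) ≤ LinearMap.ker ωN
    rw [Submodule.span_le, Set.singleton_subset_iff]
    rw [SetLike.mem_coe, LinearMap.mem_ker]
    ext w
    have : ω v (w : X) = 0 := w.2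
    simpa [hωNapp] using this
  set B1 : (N ⧸ L') →ₗ[k] N →ₗ[k] k := L'.liftQ ωN hker1 with hB1def
  have hker2 : L' ≤ LinearMap.ker B1.flip := by
    show (k ∙ vN) ≤ LinearMap.ker B1.flip
    rw [Submodule.span_le, Set.singleton_subset_iff]
    rw [SetLike.mem_coe, LinearMap.mem_ker]
    ext u
    have h1 : ω (u : X) v = 0 := by
      rw [hskew]
      have h2 : ω v (u : X) = 0 := u.2
      rw [h2, neg_zero]
    show B1 (Submodule.Quotient.mk u) vN = _
    show ωN u vN = _
    rw [hωNapp]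
    exact h1
  set ωb : (N ⧸ L') →ₗ[k] (N ⧸ L') →ₗ[k] k := (L'.liftQ B1.flip hker2).flip with hωbdef
  have hωbapp : ∀ u w : N,
      ωb (Submodule.Quotient.mk u) (Submodule.Quotient.mk w) = ω (u : X) (w : X) := by
    intro u w
    rfl
  have haltb : ∀ y : N ⧸ L', ωb y y = 0 := by
    intro y
    obtain ⟨u, rfl⟩ := Submodule.Quotient.mk_surjective L' y
    rw [hωbapp]
    exact halt _
  -- a vector `x` with `ω v x = 1`
  obtain ⟨x0, hx0⟩ : ∃ x0, ω v x0 ≠ 0 := by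
    by_contra h
    push_neg at h
    exact hg (LinearMap.ext fun w => h w)
  set x : X := (ω v x0)⁻¹ • x0 with hxdef
  have hx1 : ω v x = 1 := by
    rw [hxdef, map_smul, smul_eq_mul, inv_mul_cancel₀ hx0]
  have hndb : ∀ y : N ⧸ L', (∀ z : N ⧸ L', ωb y z = 0) → y = 0 := by
    intro y hy
    obtain ⟨u, rfl⟩ := Submodule.Quotient.mk_surjective L' y
    have hu : ∀ w : N, ω (u : X) (w : X) = 0 := by
      intro w
      rw [← hωbapp]
      exact hy _
    have key : ∀ w : X, ω ((u : X) - (ω (u : X) x) • v) w = 0 := by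
      intro w
      have hw'N : w - (ω v w) • x ∈ N := by
        rw [hNdef, LinearMap.mem_ker, map_sub, map_smul, smul_eq_mul, hx1, mul_one, sub_self]
      have h1 : ω (u : X) (w - (ω v w) • x) = 0 := hu ⟨_, hw'N⟩
      rw [map_sub, map_smul, smul_eq_mul, sub_eq_zero] at h1
      rw [map_sub, LinearMap.sub_apply, map_smul, LinearMap.smul_apply, smul_eq_mul, h1]
      ring
    have h2 : (u : X) - (ω (u : X) x) • v = 0 := hnd _ key
    have h3 : u = (ω (u : X) x) • vN := by
      apply Subtype.ext
      rw [sub_eq_zero] at h2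
      simpa [hvNdef] using h2
    rw [h3, Submodule.Quotient.mk_smul]
    rw [(Submodule.Quotient.mk_eq_zero L').mpr (Submodule.mem_span_singleton_self vN)]
    rw [smul_zero]
  -- the quotient automorphism
  set φb : (N ⧸ L') ≃ₗ[k] (N ⧸ L') := Submodule.Quotient.equiv L' L' φN hmapL with hφbdef
  have hφbapp : ∀ u : N, φb (Submodule.Quotient.mk u) = Submodule.Quotient.mk (φN u) := by
    intro u
    rfl
  have hpowN : ∀ (j : ℕ) (u : N), ((φN ^ j) u : X) = (φ ^ j) (u : X) := by
    intro j u
    rw [LinearEquiv.pow_apply, LinearEquiv.pow_apply]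
    induction j with
    | zero => rfl
    | succ j hj =>
        rw [Function.iterate_succ_apply', Function.iterate_succ_apply', hφNapp, hj]
  have hpowY : ∀ (j : ℕ) (u : N),
      (φb ^ j) (Submodule.Quotient.mk u) = Submodule.Quotient.mk ((φN ^ j) u) := by
    intro j u
    rw [LinearEquiv.pow_apply, LinearEquiv.pow_apply]
    induction j with
    | zero => rfl
    | succ j hj =>
        rw [Function.iterate_succ_apply', Function.iterate_succ_apply', hj, hφbapp]
  have hφbm : φb ^ m = 1 := by
    refine LinearEquiv.toLinearMap_injective (LinearMap.ext fun y => ?_)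
    obtain ⟨u, rfl⟩ := Submodule.Quotient.mk_surjective L' y
    show (φb ^ m) (Submodule.Quotient.mk u) = (1 : (N ⧸ L') ≃ₗ[k] (N ⧸ L')) (Submodule.Quotient.mk u)
    rw [hpowY]
    congr 1
    apply Subtype.ext
    rw [hpowN, hφm]
    rfl
  have hωbinv : ∀ y z : N ⧸ L', ωb (φb y) (φb z) = ωb y z := by
    intro y z
    obtain ⟨u, rfl⟩ := Submodule.Quotient.mk_surjective L' y
    obtain ⟨w, rfl⟩ := Submodule.Quotient.mk_surjective L' z
    rw [hφbapp, hφbapp, hωbapp, hωbapp, hφNapp, hφNapp]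
    exact hω _ _
  -- rank of the quotient
  have hYrank : Module.finrank k (N ⧸ L') = n - 2 := by
    have h := Submodule.finrank_quotient_add_finrank L'
    rw [hL'rank, hNrank] at h
    omega
  -- induction hypothesis
  obtain ⟨Wb, hWbrank, hWbiso, hWbmap⟩ :=
    ih (n - 2) (by omega) hYrank ωb haltb hndb m hm φb hφbm hωbinv hsplit
  rw [hYrank] at hWbrank
  -- pull back
  set W'' : Submodule k N := Wb.comap L'.mkQ with hW''def
  have hL'W : L' ≤ W'' := by
    intro z hz
    rw [hW''def, Submodule.mem_comap]
    have : L'.mkQ z = 0 := by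
      rw [← LinearMap.mem_ker, Submodule.ker_mkQ]
      exact hz
    rw [this]
    exact Wb.zero_mem
  have hW''mem : ∀ u : N, u ∈ W'' ↔ Submodule.Quotient.mk u ∈ Wb := fun u => Iff.rfl
  have hW''rank : Module.finrank k W'' = (n - 2) / 2 + 1 := by
    have h := LinearMap.finrank_range_add_finrank_ker (L'.mkQ.domRestrict W'')
    have hr : LinearMap.range (L'.mkQ.domRestrict W'') = Wb := by
      rw [LinearMap.range_domRestrict, hW''def, Submodule.map_comap_eq, Submodule.range_mkQ,
        top_inf_eq]
    have hk : LinearMap.ker (L'.mkQ.domRestrict W'') = L'.comap W''.subtype := by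
      ext z
      rw [LinearMap.mem_ker, LinearMap.domRestrict_apply, Submodule.mem_comap,
        ← LinearMap.mem_ker, Submodule.ker_mkQ]
      rfl
    have hkrank : Module.finrank k (LinearMap.ker (L'.mkQ.domRestrict W'')) = 1 := by
      rw [hk, (Submodule.comapSubtypeEquivOfLe hL'W).finrank_eq, hL'rank]
    rw [hr, hkrank, hWbrank] at h
    omega
  set W' : Submodule k X := W''.map N.subtype with hW'def
  refine ⟨W', ?_, ?_, ?_⟩
  · rw [hW'def, Submodule.finrank_map_subtype_eq, hW''rank, hrank]
    omega
  · rintro _ ⟨u, hu, rfl⟩ _ ⟨w, hw, rfl⟩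
    have h1 := hWbiso _ ((hW''mem u).mp hu) _ ((hW''mem w).mp hw)
    rw [hωbapp] at h1
    exact h1
  · apply le_antisymm
    · rintro _ ⟨_, ⟨u, hu, rfl⟩, rfl⟩
      refine ⟨φN u, ?_, (hφNapp u).symm⟩
      apply (hW''mem (φN u)).mpr
      have h1 : φb (Submodule.Quotient.mk u) ∈ Wb := by
        rw [← hWbmap]
        exact Submodule.mem_map_of_mem ((hW''mem u).mp hu)
      rwa [hφbapp] at h1
    · rintro _ ⟨w, hw, rfl⟩
      refine ⟨(φN.symm w : N), ⟨φN.symm w, ?_, rfl⟩, ?_⟩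
      · apply (hW''mem (φN.symm w)).mpr
        have hwmem : Submodule.Quotient.mk w ∈ Wb := (hW''mem w).mp hw
        rw [← hWbmap] at hwmem
        obtain ⟨z, hz, hze⟩ := hwmem
        have hzz : Submodule.Quotient.mk (φN.symm w) = z := by
          apply φb.injective
          rw [hφbapp, φN.apply_symm_apply]
          exact hze.symm
        rw [hzz]
        exact hz
      · show (φ : X →ₗ[k] X) ((φN.symm w : N) : X) = (w : X)
        rw [hφNsymm]
        exact φ.apply_symm_apply _

/-- A symplectic automorphism of finite order `m`, with `x^m - 1` split,
stabilises some maximal totally isotropic subspace. -/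
theorem statement18 {k : Type*} [Field k] {X : Type*} [AddCommGroup X] [Module k X]
    [FiniteDimensional k X]
    (ω : X →ₗ[k] X →ₗ[k] k) (halt : ∀ u : X, ω u u = 0)
    (hnd : ∀ u : X, (∀ v : X, ω u v = 0) → u = 0)
    (m : ℕ) (hm : 1 ≤ m)
    (φ : X ≃ₗ[k] X) (hord : orderOf φ = m)
    (hω : ∀ u v : X, ω (φ u) (φ v) = ω u v)
    (hsplit : Polynomial.Splits ((Polynomial.X ^ m - 1 : Polynomial k).map (RingHom.id k))) :
    ∃ W' : Submodule k X, Module.finrank k W' = Module.finrank k X / 2 ∧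
      (∀ u ∈ W', ∀ v ∈ W', ω u v = 0) ∧
      Submodule.map (φ : X →ₗ[k] X) W' = W' :=
  stmt18_aux (Module.finrank k X) rfl ω halt hnd m hm φ
    (by rw [← hord]; exact pow_orderOf_eq_one φ) hω (by rwa [Polynomial.map_id] at hsplit)

end
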